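/- Let L be a regular language and let A = (Q, Σ, δ, q₀, F) be a DFA recognizing L with the minimal number of states. Let M = {δ_w : w ∈ Σ*} be the transformation monoid of A, where δ_w(q) := δ(q, w). Then sc(root(L)) ≤ |M|. -/
import Mathlib


/-- `root L` = words some positive power of which lies in `L`. -/
def root {A : Type} (L : Language A) : Language A :=
  {w | ∃ m : ℕ, 1 ≤ m ∧ (List.replicate m w).flatten ∈ L}

/-- A language is regular if some DFA with finitely many states recognizes it. -/
def IsReg {A : Type} (L : Language A) : Prop :=
  ∃ (σ : Type) (_ : Fintype σ) (M : DFA A σ), M.accepts = L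

/-- The state complexity of a language: the least number of states of a DFA recognizing it. -/
noncomputable def sc {A : Type} (L : Language A) : ℕ :=
  sInf {m | ∃ (σ : Type) (_ : Fintype σ) (M : DFA A σ), M.accepts = L ∧ Fintype.card σ = m}

lemma evalFrom_append' {A σ : Type} (M : DFA A σ) (q : σ) (x y : List A) :
    M.evalFrom q (x ++ y) = M.evalFrom (M.evalFrom q x) y :=
  List.foldl_append ..

/-- **Corollary 3.1.** Let `M` be a minimal DFA recognizing `L`.  If `Mon` is the
transformation monoid of `M` (the set of transformations `δ_w`, `w` a word), then
`sc (root L) ≤ |Mon|`. -/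
theorem corollary_3_1 {A : Type} (L : Language A) {σ : Type} [Fintype σ]
    (M : DFA A σ) (hacc : M.accepts = L) (hmin : Fintype.card σ = sc L) :
    sc (root L) ≤ Set.ncard {f : σ → σ | ∃ w : List A, ∀ q, f q = M.evalFrom q w} := by
  classical
  set S : Set (σ → σ) := {f : σ → σ | ∃ w : List A, ∀ q, f q = M.evalFrom q w} with hS
  haveI : Finite (σ → σ) := inferInstance
  haveI : Fintype ↥S := Fintype.ofFinite _
  -- build the DFA on the transformation monoid
  let N : DFA A ↥S :=
    { step := fun f a => ⟨fun q => M.step (f.1 q) a, by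
        obtain ⟨w, hw⟩ := f.2
        refine ⟨w ++ [a], fun q => ?_⟩
        show M.step (f.1 q) a = _
        rw [evalFrom_append', hw q]
        rfl⟩
      start := ⟨id, ⟨[], fun q => rfl⟩⟩
      accept := {f | ∃ m : ℕ, 1 ≤ m ∧ (f.1)^[m] M.start ∈ M.accept} }
  have hevalFrom : ∀ (w : List A) (f : ↥S),
      (N.evalFrom f w).1 = fun q => M.evalFrom (f.1 q) w := by
    intro w
    induction w with
    | nil => intro f; rfl
    | cons a w ih =>
      intro f
      show (N.evalFrom (N.step f a) w).1 = _
      rw [ih]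
      rfl
  have heval : ∀ w : List A, (N.eval w).1 = fun q => M.evalFrom q w := by
    intro w; exact hevalFrom w _
  have hiter : ∀ (m : ℕ) (w : List A) (q : σ),
      M.evalFrom q (List.replicate m w).flatten = (fun p => M.evalFrom p w)^[m] q := by
    intro m w
    induction m with
    | zero => intro q; rfl
    | succ m ih =>
      intro q
      rw [List.replicate_succ, List.flatten_cons, Function.iterate_succ_apply,
        evalFrom_append']
      exact ih _
  have haccepts : N.accepts = root L := by
    ext w
    rw [DFA.mem_accepts]
    constructor
    · rintro ⟨m, hm, hmem⟩
      refine ⟨m, hm, ?_⟩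
      rw [← hacc, DFA.mem_accepts]
      show M.evalFrom M.start _ ∈ M.accept
      rw [hiter]
      have := heval w
      rw [← this]
      exact hmem
    · rintro ⟨m, hm, hmem⟩
      refine ⟨m, hm, ?_⟩
      rw [← hacc, DFA.mem_accepts] at hmem
      rw [heval w]
      rw [show (M.evalFrom · w)^[m] M.start = M.evalFrom M.start (List.replicate m w).flatten from (hiter m w M.start).symm]
      exact hmem
  have hmem : Fintype.card ↥S ∈
      {m | ∃ (τ : Type) (_ : Fintype τ) (N' : DFA A τ), N'.accepts = root L ∧ Fintype.card τ = m} :=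
    ⟨↥S, inferInstance, N, haccepts, rfl⟩
  have h1 : sc (root L) ≤ Fintype.card ↥S := Nat.sInf_le hmem
  have h2 : S.ncard = Fintype.card ↥S := by
    rw [Set.ncard_eq_toFinset_card' S, Set.toFinset_card]
  rw [h2]
  exact h1
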